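/- If an agnostic test is logically consistent and hypotheses H₁ and H₂ are both decided (L(H₁)≠0.5 and L(H₂)≠0.5), then L(Θ∖(H₁∩H₂))=0 if and only if it is not the case that both L(H₁)=0 and L(H₂)=0. -/
import Mathlib


theorem stmt_4 {Θ : Type*} (L : Set Θ → ℝ)
    (hrange : ∀ H : Set Θ, L H = 0 ∨ L H = 1/2 ∨ L H = 1)
    (hinv : ∀ H : Set Θ, (L H = 0 ↔ L Hᶜ = 1) ∧ (L H = 1/2 ↔ L Hᶜ = 1/2))
    (hmono : ∀ H H' : Set Θ, H ⊆ H' → (L H = 0 → L H' = 0) ∧ (L H < 1 → L H' < 1))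
    (hunion : ∀ (ι : Type) (H : ι → Set Θ), (∀ i, L (H i) = 1) → L (⋃ i, H i) = 1)
    (hinter : ∀ (ι : Type) (H : ι → Set Θ), (∀ i, L (H i) = 0) → L (⋂ i, H i) = 0)
    (huniv : L Set.univ = 0)
    (H₁ H₂ : Set Θ) (h₁ : L H₁ ≠ 1/2) (h₂ : L H₂ ≠ 1/2) :
    L (H₁ ∩ H₂)ᶜ = 0 ↔ ¬ (L H₁ = 0 ∧ L H₂ = 0) := by
  constructor
  · rintro hc ⟨hz1, hz2⟩
    have hint : L (H₁ ∩ H₂) = 0 := by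
      have := hinter Bool (fun b => if b then H₁ else H₂) (by
        intro b; cases b <;> simpa)
      have heq : (⋂ b : Bool, if b then H₁ else H₂) = H₁ ∩ H₂ := by
        ext x; simp [Set.mem_iInter, Bool.forall_bool, and_comm]
      rwa [heq] at this
    have h1 : L (H₁ ∩ H₂)ᶜ = 1 := ((hinv _).1).mp hint
    rw [hc] at h1
    norm_num at h1
  · intro h
    have hone : L H₁ = 1 ∨ L H₂ = 1 := by
      rcases hrange H₁ with a | a | a <;> rcases hrange H₂ with b | b | b <;>
        simp_all
    have key : ∀ H H' : Set Θ, L H = 1 → L (H ∩ H')ᶜ = 0 := by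
      intro H H' hH
      have hc0 : L Hᶜ = 0 := ((hinv Hᶜ).1).mpr (by rwa [compl_compl])
      exact (hmono Hᶜ (H ∩ H')ᶜ (by
        simp only [Set.compl_subset_compl]; exact Set.inter_subset_left)).1 hc0
    rcases hone with h | h
    · exact key H₁ H₂ h
    · rw [Set.inter_comm]; exact key H₂ H₁ h
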